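/- For every integer n ≥ 1, QEC(K_1+P_{2n}) = −4 sin²(π/(2(2n+1))). -/

import Mathlib

open Real Finset


/-- The fan graph `K₁ + Pₘ` on vertex set `{0, 1, …, m}`: vertex `0` is joined to
every other vertex, and `1, 2, …, m` form a path. -/
def fanGraph (m : ℕ) : SimpleGraph (Fin (m + 1)) where
  Adj i j := i ≠ j ∧ (i = 0 ∨ j = 0 ∨ (i : ℕ) + 1 = (j : ℕ) ∨ (j : ℕ) + 1 = (i : ℕ))
  symm := ⟨by
    intro i j ⟨h1, h2⟩
    exact ⟨h1.symm, by tauto⟩⟩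
  loopless := ⟨by intro i ⟨h1, _⟩; exact h1 rfl⟩

/-- explicit nat-valued distance function -/
def DN (a b : ℕ) : ℝ :=
  if a = b then 0 else if a = 0 ∨ b = 0 ∨ a + 1 = b ∨ b + 1 = a then 1 else 2

lemma fan_dist (m : ℕ) (i j : Fin (m+1)) :
    ((fanGraph m).dist i j : ℝ) = DN i.val j.val := by
  unfold DN
  by_cases hij : i = j
  · subst hij; simp [SimpleGraph.dist_self]
  · have hv : (i : ℕ) ≠ (j : ℕ) := fun h => hij (Fin.ext h)
    rw [if_neg hv]
    by_cases hadj : (fanGraph m).Adj i j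
    · rw [SimpleGraph.dist_eq_one_iff_adj.mpr hadj]
      have h2 := hadj.2
      have : (i:ℕ) = 0 ∨ (j:ℕ) = 0 ∨ (i:ℕ)+1 = j ∨ (j:ℕ)+1 = i := by
        rcases h2 with h|h|h|h
        · exact Or.inl (by simp [h])
        · exact Or.inr (Or.inl (by simp [h]))
        · tauto
        · tauto
      rw [if_pos this]; norm_num
    · have hcond : ¬((i:ℕ) = 0 ∨ (j:ℕ) = 0 ∨ (i:ℕ)+1 = j ∨ (j:ℕ)+1 = i) := by
        intro h
        apply hadj
        refine ⟨hij, ?_⟩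
        rcases h with h|h|h|h
        · exact Or.inl (Fin.ext h)
        · exact Or.inr (Or.inl (Fin.ext h))
        · tauto
        · tauto
      rw [if_neg hcond]
      push_neg at hcond
      obtain ⟨hi0, hj0, -, -⟩ := hcond
      have hi0' : i ≠ 0 := fun h => hi0 (by simp [h])
      have hj0' : j ≠ 0 := fun h => hj0 (by simp [h])
      have ha1 : (fanGraph m).Adj i 0 := ⟨hi0', Or.inr (Or.inl rfl)⟩
      have ha2 : (fanGraph m).Adj 0 j := ⟨fun h => hj0' h.symm, Or.inl rfl⟩
      have hle : (fanGraph m).dist i j ≤ 2 := by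
        have := SimpleGraph.dist_le (SimpleGraph.Walk.cons ha1 (SimpleGraph.Walk.cons ha2 SimpleGraph.Walk.nil))
        simpa [SimpleGraph.Walk.length_cons] using this
      have hpos : 0 < (fanGraph m).dist i j :=
        SimpleGraph.Reachable.pos_dist_of_ne ⟨SimpleGraph.Walk.cons ha1 (SimpleGraph.Walk.cons ha2 SimpleGraph.Walk.nil)⟩ hij
      have hne1 : (fanGraph m).dist i j ≠ 1 := fun h => hadj (SimpleGraph.dist_eq_one_iff_adj.mp h)
      have : (fanGraph m).dist i j = 2 := by omega
      rw [this]; norm_num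

/-- The set of values `⟨f, Df⟩` where `D` is the distance matrix of the fan graph
`K₁ + Pₘ` and `f` ranges over unit vectors orthogonal to the all-ones vector;
its maximum is the quadratic embedding constant `QEC(K₁ + Pₘ)`. -/
def qecSet (m : ℕ) : Set ℝ :=
  {r : ℝ | ∃ f : Fin (m + 1) → ℝ, (∑ i, f i ^ 2) = 1 ∧ (∑ i, f i) = 0 ∧
    r = ∑ i, ∑ j, ((fanGraph m).dist i j : ℝ) * f i * f j}

lemma DN_mul (X : ℕ → ℝ) (a b : ℕ) :
    DN a b * X a * X b =
      2*(X a * X b) - 2*(if a = b then X a * X b else 0)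
      - (if a = 0 ∧ b ≠ 0 then X a * X b else 0)
      - (if b = 0 ∧ a ≠ 0 then X a * X b else 0)
      - (if a + 1 = b ∧ a ≠ 0 then X a * X b else 0)
      - (if b + 1 = a ∧ b ≠ 0 then X a * X b else 0) := by
  unfold DN
  split_ifs <;> first | ring1 | (exfalso; omega)

lemma master (M : ℕ) (X : ℕ → ℝ) :
    ∑ a ∈ range (M+3), ∑ b ∈ range (M+3), DN a b * X a * X b
    = 2*(∑ a ∈ range (M+3), X a)^2 - 2*(∑ a ∈ range (M+3), (X a)^2)
      - 2*(X 0)*((∑ a ∈ range (M+3), X a) - X 0)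
      - 2*∑ k ∈ range (M+1), X (k+1) * X (k+2) := by
  set S := ∑ a ∈ range (M+3), X a with hS
  have hS' : ∑ k ∈ range (M+2), X (k+1) = S - X 0 := by
    have := Finset.sum_range_succ' X (M+2)
    rw [hS]; linarith [this]
  have hA : ∑ a ∈ range (M+3), ∑ b ∈ range (M+3), X a * X b = S^2 := by
    rw [← Finset.sum_mul_sum]; ring
  have hB : ∑ a ∈ range (M+3), ∑ b ∈ range (M+3), (if a = b then X a * X b else 0)
      = ∑ a ∈ range (M+3), (X a)^2 := by
    apply Finset.sum_congr rfl
    intro a ha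
    rw [Finset.sum_ite_eq (range (M+3)) a (fun b => X a * X b), if_pos ha]
    ring
  have hC : ∑ a ∈ range (M+3), ∑ b ∈ range (M+3), (if a = 0 ∧ b ≠ 0 then X a * X b else 0)
      = X 0 * (S - X 0) := by
    rw [Finset.sum_range_succ']
    have h1 : ∀ k ∈ range (M+2), (∑ b ∈ range (M+3), if (k+1) = 0 ∧ b ≠ 0 then X (k+1) * X b else 0) = 0 := by
      intro k _
      apply Finset.sum_eq_zero
      intro b _
      simp
    rw [Finset.sum_congr rfl h1, Finset.sum_const, smul_zero, zero_add]
    have h2 : (∑ b ∈ range (M+3), if (0:ℕ) = 0 ∧ b ≠ 0 then X 0 * X b else 0)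
        = ∑ b ∈ range (M+3), (if b = 0 then 0 else X 0 * X b) := by
      apply Finset.sum_congr rfl
      intro b _
      by_cases hb : b = 0 <;> simp [hb]
    rw [h2, Finset.sum_range_succ']
    simp only [if_pos rfl]
    have h3 : ∀ k ∈ range (M+2), (if k+1 = 0 then (0:ℝ) else X 0 * X (k+1)) = X 0 * X (k+1) := by
      intro k _; simp
    rw [Finset.sum_congr rfl h3, ← Finset.mul_sum, hS']
    norm_num
  have hD : ∑ a ∈ range (M+3), ∑ b ∈ range (M+3), (if b = 0 ∧ a ≠ 0 then X a * X b else 0)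
      = X 0 * (S - X 0) := by
    have hinner : ∀ a ∈ range (M+3), (∑ b ∈ range (M+3), if b = 0 ∧ a ≠ 0 then X a * X b else 0)
        = (if a = 0 then 0 else X a * X 0) := by
      intro a _
      rw [Finset.sum_range_succ']
      have : ∀ k ∈ range (M+2), (if k+1 = 0 ∧ a ≠ 0 then X a * X (k+1) else 0) = 0 := by
        intro k _; simp
      rw [Finset.sum_congr rfl this, Finset.sum_const, smul_zero, zero_add]
      by_cases ha : a = 0 <;> simp [ha]
    rw [Finset.sum_congr rfl hinner, Finset.sum_range_succ']
    simp only [if_pos rfl, add_zero]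
    have : ∀ k ∈ range (M+2), (if k+1 = 0 then (0:ℝ) else X (k+1) * X 0) = X (k+1) * X 0 := by
      intro k _; simp
    rw [Finset.sum_congr rfl this, ← Finset.sum_mul, hS']
    norm_num
    ring
  have hE : ∑ a ∈ range (M+3), ∑ b ∈ range (M+3), (if a + 1 = b ∧ a ≠ 0 then X a * X b else 0)
      = ∑ k ∈ range (M+1), X (k+1) * X (k+2) := by
    have hinner : ∀ a ∈ range (M+3), (∑ b ∈ range (M+3), if a + 1 = b ∧ a ≠ 0 then X a * X b else 0)
        = (if a+1 ∈ range (M+3) then (if a ≠ 0 then X a * X (a+1) else 0) else 0) := by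
      intro a _
      rw [show (∑ b ∈ range (M+3), if a + 1 = b ∧ a ≠ 0 then X a * X b else 0)
          = ∑ b ∈ range (M+3), if a + 1 = b then (if a ≠ 0 then X a * X b else 0) else 0 by
        apply Finset.sum_congr rfl; intro b _
        by_cases h1 : a + 1 = b <;> by_cases h2 : a ≠ 0 <;> simp [h1, h2]]
      exact Finset.sum_ite_eq (range (M+3)) (a+1) (fun b => if a ≠ 0 then X a * X b else 0)
    rw [Finset.sum_congr rfl hinner, Finset.sum_range_succ']
    simp only [ne_eq, not_true_eq_false, if_false, ite_self, add_zero]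
    rw [Finset.sum_range_succ]
    have hlast : (if M+1+1+1 ∈ range (M+3) then (if M+1+1 ≠ 0 then X (M+1+1) * X (M+1+1+1) else 0) else 0) = 0 := by
      rw [if_neg]; simp
    rw [hlast, add_zero]
    apply Finset.sum_congr rfl
    intro k hk
    rw [Finset.mem_range] at hk
    rw [if_pos (by rw [Finset.mem_range]; omega)]
    simp
  have hF : ∑ a ∈ range (M+3), ∑ b ∈ range (M+3), (if b + 1 = a ∧ b ≠ 0 then X a * X b else 0)
      = ∑ k ∈ range (M+1), X (k+1) * X (k+2) := by
    rw [Finset.sum_comm]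
    have hinner : ∀ b ∈ range (M+3), (∑ a ∈ range (M+3), if b + 1 = a ∧ b ≠ 0 then X a * X b else 0)
        = (if b+1 ∈ range (M+3) then (if b ≠ 0 then X (b+1) * X b else 0) else 0) := by
      intro b _
      rw [show (∑ a ∈ range (M+3), if b + 1 = a ∧ b ≠ 0 then X a * X b else 0)
          = ∑ a ∈ range (M+3), if b + 1 = a then (if b ≠ 0 then X a * X b else 0) else 0 by
        apply Finset.sum_congr rfl; intro a _
        by_cases h1 : b + 1 = a <;> by_cases h2 : b ≠ 0 <;> simp [h1, h2]]
      exact Finset.sum_ite_eq (range (M+3)) (b+1) (fun a => if b ≠ 0 then X a * X b else 0)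
    rw [Finset.sum_congr rfl hinner, Finset.sum_range_succ']
    simp only [ne_eq, not_true_eq_false, if_false, ite_self, add_zero]
    rw [Finset.sum_range_succ]
    have hlast : (if M+1+1+1 ∈ range (M+3) then (if M+1+1 ≠ 0 then X (M+1+1+1) * X (M+1+1) else 0) else 0) = 0 := by
      rw [if_neg]; simp
    rw [hlast, add_zero]
    apply Finset.sum_congr rfl
    intro k hk
    rw [Finset.mem_range] at hk
    rw [if_pos (by rw [Finset.mem_range]; omega)]
    simp [mul_comm]
  calc ∑ a ∈ range (M+3), ∑ b ∈ range (M+3), DN a b * X a * X b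
      = ∑ a ∈ range (M+3), ∑ b ∈ range (M+3),
        (2*(X a * X b) - 2*(if a = b then X a * X b else 0)
        - (if a = 0 ∧ b ≠ 0 then X a * X b else 0)
        - (if b = 0 ∧ a ≠ 0 then X a * X b else 0)
        - (if a + 1 = b ∧ a ≠ 0 then X a * X b else 0)
        - (if b + 1 = a ∧ b ≠ 0 then X a * X b else 0)) := by
        apply Finset.sum_congr rfl; intro a _; apply Finset.sum_congr rfl; intro b _
        exact DN_mul X a b
    _ = 2*(∑ a ∈ range (M+3), ∑ b ∈ range (M+3), X a * X b)
        - 2*(∑ a ∈ range (M+3), ∑ b ∈ range (M+3), (if a = b then X a * X b else 0))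
        - (∑ a ∈ range (M+3), ∑ b ∈ range (M+3), (if a = 0 ∧ b ≠ 0 then X a * X b else 0))
        - (∑ a ∈ range (M+3), ∑ b ∈ range (M+3), (if b = 0 ∧ a ≠ 0 then X a * X b else 0))
        - (∑ a ∈ range (M+3), ∑ b ∈ range (M+3), (if a + 1 = b ∧ a ≠ 0 then X a * X b else 0))
        - (∑ a ∈ range (M+3), ∑ b ∈ range (M+3), (if b + 1 = a ∧ b ≠ 0 then X a * X b else 0)) := by
        simp only [Finset.sum_sub_distrib, Finset.mul_sum]
    _ = 2*S^2 - 2*(∑ a ∈ range (M+3), (X a)^2) - 2*(X 0)*(S - X 0)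
        - 2*∑ k ∈ range (M+1), X (k+1) * X (k+2) := by
        rw [hA, hB, hC, hD, hE, hF]; ring


lemma trig_sin (θ u : ℝ) : Real.sin (u + 2*θ) + Real.sin u = 2 * Real.cos θ * Real.sin (u + θ) := by
  have h1 : Real.sin (u + 2*θ) = Real.sin ((u+θ)+θ) := by ring_nf
  have h2 : Real.sin u = Real.sin ((u+θ)-θ) := by ring_nf
  rw [h1, h2, Real.sin_add, Real.sin_sub]; ring

lemma trig_cos (θ u : ℝ) : Real.cos (u + 2*θ) + Real.cos u = 2 * Real.cos θ * Real.cos (u + θ) := by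
  have h1 : Real.cos (u + 2*θ) = Real.cos ((u+θ)+θ) := by ring_nf
  have h2 : Real.cos u = Real.cos ((u+θ)-θ) := by ring_nf
  rw [h1, h2, Real.cos_add, Real.cos_sub]; ring

lemma sin_pos_aux (M : ℕ) (θ : ℝ) (hθ0 : 0 < θ) (hθπ : ((M:ℝ)+3)*θ = π) :
    ∀ k : ℕ, k ≤ M+1 → 0 < Real.sin (((k:ℝ)+1)*θ) := by
  intro k hk
  apply Real.sin_pos_of_pos_of_lt_pi
  · positivity
  · rw [← hθπ]
    have : (k:ℝ) ≤ (M:ℝ)+1 := by exact_mod_cast hk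
    nlinarith

lemma bilin (M : ℕ) (θ : ℝ) (hθ0 : 0 < θ) (hθπ : ((M:ℝ)+3)*θ = π) (a b : ℕ → ℝ) :
    ∑ k ∈ range (M+1),
      ((Real.sin (((k:ℝ)+2)*θ) * a k + Real.sin (((k:ℝ)+1)*θ) * a (k+1))
        * (Real.sin (((k:ℝ)+2)*θ) * b k + Real.sin (((k:ℝ)+1)*θ) * b (k+1)))
      / (2 * Real.sin (((k:ℝ)+1)*θ) * Real.sin (((k:ℝ)+2)*θ))
    = ∑ k ∈ range (M+1), (a k * b (k+1) + a (k+1) * b k)/2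
      + Real.cos θ * ∑ k ∈ range (M+2), a k * b k := by
  have hsin := sin_pos_aux M θ hθ0 hθπ
  set A : ℕ → ℝ := fun k => Real.sin (((k:ℝ)+2)*θ)/(2*Real.sin (((k:ℝ)+1)*θ)) * (a k * b k) with hA
  set B : ℕ → ℝ := fun k => Real.sin ((k:ℝ)*θ)/(2*Real.sin (((k:ℝ)+1)*θ)) * (a k * b k) with hB
  have hterm : ∀ k ∈ range (M+1),
      ((Real.sin (((k:ℝ)+2)*θ) * a k + Real.sin (((k:ℝ)+1)*θ) * a (k+1))
        * (Real.sin (((k:ℝ)+2)*θ) * b k + Real.sin (((k:ℝ)+1)*θ) * b (k+1)))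
      / (2 * Real.sin (((k:ℝ)+1)*θ) * Real.sin (((k:ℝ)+2)*θ))
      = A k + (a k * b (k+1) + a (k+1) * b k)/2 + B (k+1) := by
    intro k hk
    rw [Finset.mem_range] at hk
    have h1 : 0 < Real.sin (((k:ℝ)+1)*θ) := hsin k (by omega)
    have h2 : 0 < Real.sin (((k:ℝ)+2)*θ) := by
      have := hsin (k+1) (by omega)
      push_cast at this
      convert this using 3
      ring
    simp only [hA, hB]
    push_cast
    rw [show ((k:ℝ)+1+1)*θ = ((k:ℝ)+2)*θ by ring]
    have h1' : Real.sin (θ*((k:ℝ)+1)) ≠ 0 := by rw [mul_comm]; exact h1.ne'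
    have h2' : Real.sin (θ*((k:ℝ)+2)) ≠ 0 := by rw [mul_comm]; exact h2.ne'
    field_simp
    ring
  rw [Finset.sum_congr rfl hterm]
  rw [Finset.sum_add_distrib, Finset.sum_add_distrib]
  have hAtop : A (M+1) = 0 := by
    simp only [hA]
    push_cast
    rw [show ((M:ℝ)+1+2)*θ = ((M:ℝ)+3)*θ by ring, hθπ, Real.sin_pi]
    simp
  have hB0 : B 0 = 0 := by simp [hB]
  have hAsum : ∑ k ∈ range (M+2), A k = ∑ k ∈ range (M+1), A k := by
    rw [Finset.sum_range_succ, hAtop, add_zero]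
  have hBsum : ∑ k ∈ range (M+2), B k = ∑ k ∈ range (M+1), B (k+1) := by
    rw [Finset.sum_range_succ' B (M+1), hB0, add_zero]
  have hAB : ∑ k ∈ range (M+2), A k + ∑ k ∈ range (M+2), B k
      = Real.cos θ * ∑ k ∈ range (M+2), a k * b k := by
    rw [← Finset.sum_add_distrib, Finset.mul_sum]
    apply Finset.sum_congr rfl
    intro k hk
    rw [Finset.mem_range] at hk
    have h1 : 0 < Real.sin (((k:ℝ)+1)*θ) := hsin k (by omega)
    have htrig := trig_sin θ ((k:ℝ)*θ)
    simp only [hA, hB]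
    rw [show ((k:ℝ)+2)*θ = (k:ℝ)*θ+2*θ by ring, show ((k:ℝ)+1)*θ = (k:ℝ)*θ+θ by ring] at *
    have h1' : Real.sin (θ*((k:ℝ)+1)) ≠ 0 := by
      rw [show θ*((k:ℝ)+1) = (k:ℝ)*θ+θ by ring]; exact h1.ne'
    field_simp
    ring_nf at htrig ⊢
    linear_combination (a k * b k) * htrig
  -- combine
  linarith [hAB, hAsum, hBsum]

lemma key_ineq (M : ℕ) (hM : Even M) :
    (1 - Real.cos (π/((M:ℝ)+3))) * ((M:ℝ)+3) ≤ 1 + Real.cos (π/((M:ℝ)+3)) := by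
  rcases Nat.eq_zero_or_pos M with h0 | hpos
  · subst h0
    norm_num [Real.cos_pi_div_three]
  · have hM2 : 2 ≤ M := by
      rcases hM with ⟨j, rfl⟩; omega
    set K : ℝ := (M:ℝ)+3 with hK
    have hK5 : 5 ≤ K := by
      have : (2:ℝ) ≤ (M:ℝ) := by exact_mod_cast hM2
      simp only [hK]; linarith
    have hK0 : (0:ℝ) < K := by linarith
    set t : ℝ := π/K with ht
    have hb : 1 - t^2/2 ≤ Real.cos t := Real.one_sub_sq_div_two_le_cos
    have hπ : π ≤ 3.15 := by linarith [Real.pi_lt_d2]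
    have ht0 : 0 < t := div_pos Real.pi_pos hK0
    have ht63 : t ≤ 0.63 := by
      rw [ht, div_le_iff₀ hK0]
      nlinarith
    have hc : 1 - t^2/2 ≤ Real.cos t := hb
    have htsq : t^2 ≤ 0.3969 := by nlinarith
    have h3 : (1 - Real.cos t)*K ≤ (t^2/2)*K := by
      apply mul_le_mul_of_nonneg_right _ (by linarith)
      linarith
    have h4 : (t^2/2)*K = t*(t*K)/2 := by ring
    have h5 : t*K = π := by rw [ht]; field_simp
    have h6 : t*π ≤ 0.63*3.15 := by
      apply mul_le_mul ht63 hπ Real.pi_pos.le (by norm_num)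
    have h7 : Real.cos t ≥ 0.8 := by nlinarith
    nlinarith

lemma star (M : ℕ) (hM : Even M) (x : ℕ → ℝ) :
    (1 - Real.cos (π/((M:ℝ)+3))) * (∑ k ∈ range (M+2), x k)^2
    ≤ ∑ k ∈ range (M+1), x k * x (k+1)
      + Real.cos (π/((M:ℝ)+3)) * ∑ k ∈ range (M+2), (x k)^2 := by
  set θ : ℝ := π/((M:ℝ)+3) with hθ
  have hM3 : (0:ℝ) < (M:ℝ)+3 := by positivity
  have hθ0 : 0 < θ := div_pos Real.pi_pos hM3
  have hθπ : ((M:ℝ)+3)*θ = π := by rw [hθ]; field_simp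
  set c : ℝ := Real.cos θ with hc
  have hc1 : c ≤ 1 := Real.cos_le_one θ
  have hcpos : 0 < c := by
    apply Real.cos_pos_of_mem_Ioo
    constructor
    · linarith [Real.pi_pos]
    · rw [hθ]
      rw [div_lt_iff₀ hM3]
      nlinarith [Real.pi_pos]
  have hc0 : (0:ℝ) < 1 + c := by linarith
  have hc0' : (1:ℝ) + c ≠ 0 := ne_of_gt hc0
  have hsin := sin_pos_aux M θ hθ0 hθπ
  -- the auxiliary vector y
  set y : ℕ → ℝ := fun i => (1 - (-1)^i * Real.cos ((i:ℝ)*θ))/(1+c) with hy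
  have hyrec : ∀ i : ℕ, (y i + y (i+2))/2 + c * y (i+1) = 1 := by
    intro i
    have htrig := trig_cos θ ((i:ℝ)*θ)
    simp only [hy]
    push_cast
    rw [show ((i:ℝ)+2)*θ = (i:ℝ)*θ+2*θ by ring, show ((i:ℝ)+1)*θ = (i:ℝ)*θ+θ by ring]
    rw [show (-1:ℝ)^(i+2) = (-1)^i by rw [pow_add]; norm_num,
        show (-1:ℝ)^(i+1) = -(-1)^i by rw [pow_add]; norm_num]
    field_simp
    rw [← hc] at htrig
    ring_nf at htrig ⊢
    linear_combination (-(-1:ℝ)^i) * htrig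
  have hy1 : y 1 = 1 := by
    simp only [hy]
    push_cast
    rw [one_mul, pow_one]
    rw [← hc]
    field_simp
    ring
  have hym : y (M+2) = 1 := by
    simp only [hy]
    have he : Even (M+2) := by rcases hM with ⟨j, rfl⟩; exact ⟨j+1, by ring⟩
    rw [he.neg_one_pow]
    push_cast
    rw [show ((M:ℝ)+2)*θ = π - θ by rw [← hθπ]; ring, Real.cos_pi_sub, ← hc]
    field_simp
    ring
  have hym1 : y (M+3) = 0 := by
    simp only [hy]
    have ho : Odd (M+3) := by rcases hM with ⟨j, rfl⟩; exact ⟨j+1, by ring⟩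
    rw [ho.neg_one_pow]
    push_cast
    rw [show ((M:ℝ)+3)*θ = π by rw [← hθπ], Real.cos_pi]
    norm_num
  have hy0 : y 0 = 0 := by simp [hy]
  -- key bilinear identity: B(xx, Y) = sum xx
  have key1 : ∀ xx : ℕ → ℝ,
      ∑ k ∈ range (M+1), (xx k * y (k+2) + xx (k+1) * y (k+1))/2
        + c * ∑ k ∈ range (M+2), xx k * y (k+1) = ∑ k ∈ range (M+2), xx k := by
    intro xx
    have e1 : ∑ k ∈ range (M+2), xx k * y (k+2)/2 = ∑ k ∈ range (M+1), xx k * y (k+2)/2 := by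
      rw [Finset.sum_range_succ]
      rw [show M+1+2 = M+3 from rfl, hym1]
      ring
    have e2 : ∑ k ∈ range (M+2), xx k * y k/2 = ∑ k ∈ range (M+1), xx (k+1) * y (k+1)/2 := by
      rw [Finset.sum_range_succ' (fun k => xx k * y k/2) (M+1)]
      rw [hy0]
      ring
    have e3 : ∀ k ∈ range (M+2), xx k * y (k+2)/2 + xx k * y k/2 + c*(xx k * y (k+1)) = xx k := by
      intro k _
      linear_combination (xx k) * hyrec k
    have split : ∀ k ∈ range (M+1), (xx k * y (k+2) + xx (k+1) * y (k+1))/2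
        = xx k * y (k+2)/2 + xx (k+1) * y (k+1)/2 := fun k _ => by ring
    rw [Finset.sum_congr rfl split, Finset.sum_add_distrib, ← e1, ← e2, Finset.mul_sum,
        ← Finset.sum_add_distrib, ← Finset.sum_add_distrib]
    exact Finset.sum_congr rfl e3
  -- the sum of y (k+1)
  have hSY : ∑ k ∈ range (M+2), y (k+1) = ((M:ℝ)+3)/(1+c) := by
    have h1 := key1 (fun _ => 1)
    simp only [one_mul] at h1
    rw [Finset.sum_const, Finset.card_range, nsmul_eq_mul, mul_one] at h1
    have hsplit : ∀ k ∈ range (M+1), (y (k+2) + y (k+1))/2 = y (k+2)/2 + y (k+1)/2 :=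
      fun k _ => by ring
    rw [Finset.sum_congr rfl hsplit, Finset.sum_add_distrib] at h1
    have h2 : ∑ k ∈ range (M+2), y (k+1) = (∑ k ∈ range (M+1), y (k+2)) + y 1 := by
      rw [Finset.sum_range_succ' (fun k => y (k+1)) (M+1)]
    have h3 : ∑ k ∈ range (M+2), y (k+1) = (∑ k ∈ range (M+1), y (k+1)) + y (M+2) := by
      rw [Finset.sum_range_succ (fun k => y (k+1)) (M+1)]
    rw [hy1] at h2
    rw [hym] at h3
    have h4 : ∑ k ∈ range (M+1), y (k+2)/2 = (∑ k ∈ range (M+1), y (k+2))/2 := by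
      rw [Finset.sum_div]
    have h5 : ∑ k ∈ range (M+1), y (k+1)/2 = (∑ k ∈ range (M+1), y (k+1))/2 := by
      rw [Finset.sum_div]
    rw [h4, h5] at h1
    have hMc : ((M+2:ℕ):ℝ) = (M:ℝ)+2 := by push_cast; ring
    rw [hMc] at h1
    rw [eq_div_iff hc0']
    nlinarith [h1, h2, h3]
  -- Cauchy-Schwarz setup
  have hnorm : ∀ k:ℕ, k+1+1 = k+2 := fun k => rfl
  have hQ := bilin M θ hθ0 hθπ x x
  have hXY := bilin M θ hθ0 hθπ x (fun k => y (k+1))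
  have hYY := bilin M θ hθ0 hθπ (fun k => y (k+1)) (fun k => y (k+1))
  simp only [hnorm] at hQ hXY hYY
  have hXYval : ∑ k ∈ range (M+1),
      ((Real.sin (((k:ℝ)+2)*θ) * x k + Real.sin (((k:ℝ)+1)*θ) * x (k+1))
        * (Real.sin (((k:ℝ)+2)*θ) * y (k+1) + Real.sin (((k:ℝ)+1)*θ) * y (k+2)))
      / (2 * Real.sin (((k:ℝ)+1)*θ) * Real.sin (((k:ℝ)+2)*θ))
      = ∑ k ∈ range (M+2), x k := by
    rw [hXY, key1 x]
  have hYYval : ∑ k ∈ range (M+1),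
      ((Real.sin (((k:ℝ)+2)*θ) * y (k+1) + Real.sin (((k:ℝ)+1)*θ) * y (k+2))
        * (Real.sin (((k:ℝ)+2)*θ) * y (k+1) + Real.sin (((k:ℝ)+1)*θ) * y (k+2)))
      / (2 * Real.sin (((k:ℝ)+1)*θ) * Real.sin (((k:ℝ)+2)*θ))
      = ((M:ℝ)+3)/(1+c) := by
    rw [hYY, key1 (fun k => y (k+1)), hSY]
  have hQval : ∑ k ∈ range (M+1),
      ((Real.sin (((k:ℝ)+2)*θ) * x k + Real.sin (((k:ℝ)+1)*θ) * x (k+1))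
        * (Real.sin (((k:ℝ)+2)*θ) * x k + Real.sin (((k:ℝ)+1)*θ) * x (k+1)))
      / (2 * Real.sin (((k:ℝ)+1)*θ) * Real.sin (((k:ℝ)+2)*θ))
      = ∑ k ∈ range (M+1), x k * x (k+1) + c * ∑ k ∈ range (M+2), (x k)^2 := by
    rw [hQ]
    congr 1
    · exact Finset.sum_congr rfl (fun k _ => by ring)
    · rw [← hc]
      congr 1
      exact Finset.sum_congr rfl (fun k _ => by ring)
  -- positivity of denominators
  have hd : ∀ k ∈ range (M+1), 0 < 2 * Real.sin (((k:ℝ)+1)*θ) * Real.sin (((k:ℝ)+2)*θ) := by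
    intro k hk
    rw [Finset.mem_range] at hk
    have h1 : 0 < Real.sin (((k:ℝ)+1)*θ) := hsin k (by omega)
    have h2 : 0 < Real.sin (((k:ℝ)+2)*θ) := by
      have := hsin (k+1) (by omega)
      push_cast at this
      convert this using 3
      ring
    positivity
  -- Cauchy-Schwarz
  set U : ℕ → ℝ := fun k => Real.sin (((k:ℝ)+2)*θ) * x k + Real.sin (((k:ℝ)+1)*θ) * x (k+1) with hU
  set V : ℕ → ℝ := fun k => Real.sin (((k:ℝ)+2)*θ) * y (k+1) + Real.sin (((k:ℝ)+1)*θ) * y (k+2) with hV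
  set d : ℕ → ℝ := fun k => 2 * Real.sin (((k:ℝ)+1)*θ) * Real.sin (((k:ℝ)+2)*θ) with hd'
  have hCS := Finset.sum_mul_sq_le_sq_mul_sq (range (M+1))
      (fun k => U k / Real.sqrt (d k)) (fun k => V k / Real.sqrt (d k))
  have hfg : ∀ k ∈ range (M+1), (U k / Real.sqrt (d k)) * (V k / Real.sqrt (d k)) = U k * V k / d k := by
    intro k hk
    have hdk := hd k hk
    rw [div_mul_div_comm, Real.mul_self_sqrt (le_of_lt hdk)]
  have hff : ∀ k ∈ range (M+1), (U k / Real.sqrt (d k))^2 = U k * U k / d k := by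
    intro k hk
    have hdk := hd k hk
    rw [div_pow, Real.sq_sqrt (le_of_lt hdk)]
    ring
  have hgg : ∀ k ∈ range (M+1), (V k / Real.sqrt (d k))^2 = V k * V k / d k := by
    intro k hk
    have hdk := hd k hk
    rw [div_pow, Real.sq_sqrt (le_of_lt hdk)]
    ring
  rw [Finset.sum_congr rfl hfg, Finset.sum_congr rfl hff, Finset.sum_congr rfl hgg] at hCS
  rw [hXYval, hYYval, hQval] at hCS
  -- nonnegativity of the quadratic form
  have hQ0 : 0 ≤ ∑ k ∈ range (M+1), x k * x (k+1) + c * ∑ k ∈ range (M+2), (x k)^2 := by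
    rw [← hQval]
    apply Finset.sum_nonneg
    intro k hk
    exact div_nonneg (mul_self_nonneg _) (le_of_lt (hd k hk))
  -- final assembly
  have hki := key_ineq M hM
  rw [← hθ, ← hc] at hki
  set Q : ℝ := ∑ k ∈ range (M+1), x k * x (k+1) + c * ∑ k ∈ range (M+2), (x k)^2 with hQdef
  set s : ℝ := ∑ k ∈ range (M+2), x k with hs
  -- hCS : s^2 ≤ Q * ((M+3)/(1+c))
  have h1 : (1-c)*s^2 ≤ (1-c)*(Q*(((M:ℝ)+3)/(1+c))) :=
    mul_le_mul_of_nonneg_left hCS (by linarith)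
  have h2 : (1-c)*(Q*(((M:ℝ)+3)/(1+c))) ≤ Q := by
    rw [show (1-c)*(Q*(((M:ℝ)+3)/(1+c))) = ((1-c)*((M:ℝ)+3))*Q/(1+c) by field_simp]
    rw [div_le_iff₀ hc0]
    nlinarith [mul_le_mul_of_nonneg_right hki hQ0]
  linarith


lemma double_conv (m : ℕ) (f : Fin (m+1) → ℝ) (X : ℕ → ℝ)
    (hfX : ∀ i : Fin (m+1), f i = X i.val) :
    ∑ i, ∑ j, ((fanGraph m).dist i j : ℝ) * f i * f j
    = ∑ a ∈ range (m+1), ∑ b ∈ range (m+1), DN a b * X a * X b := by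
  have h1 : ∀ i : Fin (m+1), (∑ j, ((fanGraph m).dist i j : ℝ) * f i * f j)
      = ∑ b ∈ range (m+1), DN i.val b * X i.val * X b := by
    intro i
    rw [show (∑ j, ((fanGraph m).dist i j : ℝ) * f i * f j)
        = ∑ j : Fin (m+1), DN i.val j.val * X i.val * X j.val from
      Finset.sum_congr rfl (fun j _ => by rw [fan_dist, hfX i, hfX j])]
    exact Fin.sum_univ_eq_sum_range (fun b => DN i.val b * X i.val * X b) (m+1)
  rw [Finset.sum_congr rfl (fun i _ => h1 i)]
  exact Fin.sum_univ_eq_sum_range (fun a => ∑ b ∈ range (m+1), DN a b * X a * X b) (m+1)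

theorem main_aux (M : ℕ) (hM : Even M) :
    IsGreatest (qecSet (M+2)) (2*Real.cos (π/((M:ℝ)+3)) - 2) := by
  have hMM : M+2+1 = M+3 := rfl
  set θ : ℝ := π/((M:ℝ)+3) with hθ
  have hM3 : (0:ℝ) < (M:ℝ)+3 := by positivity
  have hθ0 : 0 < θ := div_pos Real.pi_pos hM3
  have hθπ : ((M:ℝ)+3)*θ = π := by rw [hθ]; field_simp
  set c : ℝ := Real.cos θ with hc
  have hc1 : c ≤ 1 := Real.cos_le_one θ
  have hcpos : 0 < c := by
    apply Real.cos_pos_of_mem_Ioo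
    constructor
    · linarith [Real.pi_pos]
    · rw [hθ, div_lt_iff₀ hM3]
      nlinarith [Real.pi_pos]
  have hc0 : (0:ℝ) < 1 + c := by linarith
  have hc0' : (1:ℝ) + c ≠ 0 := ne_of_gt hc0
  have hθltπ : θ < π := by
    rw [hθ]
    rw [div_lt_iff₀ hM3]
    nlinarith [Real.pi_pos]
  have hsθ : 0 < Real.sin θ := Real.sin_pos_of_pos_of_lt_pi hθ0 hθltπ
  have hnorm : ∀ k:ℕ, k+1+1 = k+2 := fun k => rfl
  -- the eigenvector v
  set v : ℕ → ℝ := fun i => (-1)^(i+1) * Real.sin ((i:ℝ)*θ) with hv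
  have hvrec : ∀ i : ℕ, (v i + v (i+2))/2 + c * v (i+1) = 0 := by
    intro i
    have htrig := trig_sin θ ((i:ℝ)*θ)
    simp only [hv]
    push_cast
    rw [show ((i:ℝ)+2)*θ = (i:ℝ)*θ+2*θ by ring, show ((i:ℝ)+1)*θ = (i:ℝ)*θ+θ by ring]
    rw [show (-1:ℝ)^(i+2+1) = (-1)^(i+1) by ring, show (-1:ℝ)^(i+1+1) = -(-1)^(i+1) by ring]
    linear_combination ((-1:ℝ)^(i+1)/2) * htrig
  have hv0 : v 0 = 0 := by simp [hv]
  have hv1 : v 1 = Real.sin θ := by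
    simp only [hv]
    push_cast
    norm_num
  have hvm : v (M+2) = -Real.sin θ := by
    simp only [hv]
    have ho : Odd (M+2+1) := by rcases hM with ⟨j, rfl⟩; exact ⟨j+1, by ring⟩
    rw [ho.neg_one_pow]
    push_cast
    rw [show ((M:ℝ)+2)*θ = π - θ by rw [← hθπ]; ring, Real.sin_pi_sub]
    ring
  have hvm1 : v (M+3) = 0 := by
    simp only [hv]
    push_cast
    rw [show ((M:ℝ)+3)*θ = π by rw [← hθπ], Real.sin_pi]
    ring
  -- key identity for v
  have vkey : ∀ xx : ℕ → ℝ,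
      ∑ k ∈ range (M+1), (xx k * v (k+2) + xx (k+1) * v (k+1))/2
        + c * ∑ k ∈ range (M+2), xx k * v (k+1) = 0 := by
    intro xx
    have e1 : ∑ k ∈ range (M+2), xx k * v (k+2)/2 = ∑ k ∈ range (M+1), xx k * v (k+2)/2 := by
      rw [Finset.sum_range_succ]
      rw [show M+1+2 = M+3 from rfl, hvm1]
      ring
    have e2 : ∑ k ∈ range (M+2), xx k * v k/2 = ∑ k ∈ range (M+1), xx (k+1) * v (k+1)/2 := by
      rw [Finset.sum_range_succ' (fun k => xx k * v k/2) (M+1)]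
      rw [hv0]
      ring
    have split : ∀ k ∈ range (M+1), (xx k * v (k+2) + xx (k+1) * v (k+1))/2
        = xx k * v (k+2)/2 + xx (k+1) * v (k+1)/2 := fun k _ => by ring
    rw [Finset.sum_congr rfl split, Finset.sum_add_distrib, ← e1, ← e2, Finset.mul_sum,
        ← Finset.sum_add_distrib, ← Finset.sum_add_distrib]
    apply Finset.sum_eq_zero
    intro k _
    linear_combination (xx k) * hvrec k
  -- sum of v is zero
  have hT : ∑ k ∈ range (M+2), v (k+1) = 0 := by
    have h1 := vkey (fun _ => 1)
    simp only [one_mul] at h1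
    have hsplit : ∀ k ∈ range (M+1), (v (k+2) + v (k+1))/2 = v (k+2)/2 + v (k+1)/2 :=
      fun k _ => by ring
    rw [Finset.sum_congr rfl hsplit, Finset.sum_add_distrib] at h1
    have h2 : ∑ k ∈ range (M+2), v (k+1) = (∑ k ∈ range (M+1), v (k+2)) + v 1 := by
      rw [Finset.sum_range_succ' (fun k => v (k+1)) (M+1)]
    have h3 : ∑ k ∈ range (M+2), v (k+1) = (∑ k ∈ range (M+1), v (k+1)) + v (M+2) := by
      rw [Finset.sum_range_succ (fun k => v (k+1)) (M+1)]
    rw [hv1] at h2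
    rw [hvm] at h3
    have h4 : ∑ k ∈ range (M+1), v (k+2)/2 = (∑ k ∈ range (M+1), v (k+2))/2 := by
      rw [Finset.sum_div]
    have h5 : ∑ k ∈ range (M+1), v (k+1)/2 = (∑ k ∈ range (M+1), v (k+1))/2 := by
      rw [Finset.sum_div]
    rw [h4, h5] at h1
    have h6 : (1+c) * (∑ k ∈ range (M+2), v (k+1)) = 0 := by linarith
    rcases mul_eq_zero.mp h6 with h | h
    · exact absurd h hc0'
    · exact h
  -- norm squared
  set N2 : ℝ := ∑ k ∈ range (M+2), (v (k+1))^2 with hN2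
  have hN2pos : 0 < N2 := by
    have h01 : (0:ℕ) ∈ range (M+2) := by simp
    have hle := Finset.single_le_sum (f := fun k => (v (k+1))^2)
      (fun k _ => sq_nonneg (v (k+1))) h01
    have : (0:ℝ) < (v 1)^2 := by
      rw [hv1]; positivity
    rw [hN2]
    calc (0:ℝ) < (v 1)^2 := this
      _ = (v (0+1))^2 := by norm_num
      _ ≤ _ := hle
  have hPv : ∑ k ∈ range (M+1), v (k+1) * v (k+2) = -(c*N2) := by
    have h1 := vkey (fun k => v (k+1))
    simp only [hnorm] at h1
    have e1 : ∀ k ∈ range (M+1), (v (k+1) * v (k+2) + v (k+2) * v (k+1))/2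
        = v (k+1) * v (k+2) := fun k _ => by ring
    rw [Finset.sum_congr rfl e1] at h1
    have e2 : ∑ k ∈ range (M+2), v (k+1) * v (k+1) = N2 :=
      Finset.sum_congr rfl (fun k _ => by ring)
    rw [e2] at h1
    linarith
  set N : ℝ := Real.sqrt N2 with hNdef
  have hNpos : 0 < N := Real.sqrt_pos.mpr hN2pos
  have hNN : N * N = N2 := Real.mul_self_sqrt (le_of_lt hN2pos)
  have hNsq : N^2 = N2 := by rw [sq]; exact hNN
  have hNne : N ≠ 0 := ne_of_gt hNpos
  set X : ℕ → ℝ := fun a => v a / N with hX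
  have hX0 : X 0 = 0 := by simp [hX, hv0]
  have hXsum : ∑ a ∈ range (M+3), X a = 0 := by
    rw [Finset.sum_range_succ' X (M+2), hX0, add_zero]
    simp only [hX]
    rw [← Finset.sum_div, hT, zero_div]
  have hXsq : ∑ a ∈ range (M+3), (X a)^2 = 1 := by
    rw [Finset.sum_range_succ' (fun a => (X a)^2) (M+2), hX0]
    simp only [hX]
    rw [show ((0:ℝ)^2) = 0 by norm_num, add_zero]
    have : ∀ k ∈ range (M+2), (v (k+1) / N)^2 = (v (k+1))^2 / N2 := by
      intro k _
      rw [div_pow, hNsq]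
    rw [Finset.sum_congr rfl this, ← Finset.sum_div, ← hN2, div_self (ne_of_gt hN2pos)]
  have hXP : ∑ k ∈ range (M+1), X (k+1) * X (k+2) = -c := by
    simp only [hX]
    have : ∀ k ∈ range (M+1), v (k+1)/N * (v (k+2)/N) = v (k+1) * v (k+2) / N2 := by
      intro k _
      rw [div_mul_div_comm, hNN]
    rw [Finset.sum_congr rfl this, ← Finset.sum_div, hPv]
    field_simp
  constructor
  · -- membership
    refine ⟨fun i => X i.val, ?_, ?_, ?_⟩
    · rw [Fin.sum_univ_eq_sum_range (fun a => (X a)^2) (M+2+1)]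
      rw [show M+2+1 = M+3 from rfl]
      exact hXsq
    · rw [Fin.sum_univ_eq_sum_range X (M+2+1)]
      rw [show M+2+1 = M+3 from rfl]
      exact hXsum
    · rw [double_conv (M+2) (fun i => X i.val) X (fun i => rfl)]
      rw [show M+2+1 = M+3 from rfl]
      rw [master M X, hXsum, hXsq, hX0, hXP]
      ring
  · -- upper bound
    rintro r ⟨f, hf1, hf2, rfl⟩
    set Y : ℕ → ℝ := fun a => if h : a < M+2+1 then f ⟨a, h⟩ else 0 with hY
    have hfY : ∀ i : Fin (M+2+1), f i = Y i.val := by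
      intro i
      show f i = (if h : i.val < M+2+1 then f ⟨i.val, h⟩ else 0)
      rw [dif_pos i.isLt]
    have hYsum : ∑ a ∈ range (M+2+1), Y a = 0 := by
      rw [← hf2, Finset.sum_congr rfl (fun i _ => (hfY i))]
      rw [Fin.sum_univ_eq_sum_range Y (M+2+1)]
    have hYsq : ∑ a ∈ range (M+2+1), (Y a)^2 = 1 := by
      rw [← hf1]
      rw [show (∑ i, f i ^2) = ∑ i : Fin (M+2+1), (Y i.val)^2 from
        Finset.sum_congr rfl (fun i _ => by rw [hfY i])]
      rw [Fin.sum_univ_eq_sum_range (fun a => (Y a)^2) (M+2+1)]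
    have hconv := double_conv (M+2) f Y hfY
    have hmast : ∑ a ∈ range (M+2+1), ∑ b ∈ range (M+2+1), DN a b * Y a * Y b
        = 2*(∑ a ∈ range (M+2+1), Y a)^2 - 2*(∑ a ∈ range (M+2+1), (Y a)^2)
          - 2*(Y 0)*((∑ a ∈ range (M+2+1), Y a) - Y 0)
          - 2*∑ k ∈ range (M+1), Y (k+1) * Y (k+2) := master M Y
    rw [hconv, hmast, hYsum, hYsq]
    -- now : goal 2*0^2 - 2*1 - 2*Y 0*(0 - Y 0) - 2*P ≤ 2c - 2
    have hstar := star M hM (fun k => Y (k+1))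
    simp only [hnorm] at hstar
    rw [← hθ, ← hc] at hstar
    have h2 : ∑ k ∈ range (M+2), Y (k+1) = - Y 0 := by
      have h := Finset.sum_range_succ' Y (M+2)
      rw [hYsum] at h
      linarith
    have h3 : ∑ k ∈ range (M+2), (Y (k+1))^2 = 1 - (Y 0)^2 := by
      have h := Finset.sum_range_succ' (fun a => (Y a)^2) (M+2)
      rw [hYsq] at h
      linarith
    rw [h2, h3] at hstar
    nlinarith [hstar]

/-- For every `n ≥ 1`, `QEC(K₁ + P₂ₙ) = −4 sin²(π/(2(2n+1)))`. -/
theorem qec_fan_even (n : ℕ) (hn : 1 ≤ n) :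
    IsGreatest (qecSet (2 * n)) (-4 * Real.sin (π / (2 * (2 * n + 1))) ^ 2) := by
  have hM : Even (2*n-2) := ⟨n-1, by omega⟩
  have haux := main_aux (2*n-2) hM
  rw [show (2*n-2)+2 = 2*n by omega] at haux
  have hcast : ((2*n-2:ℕ):ℝ) = 2*(n:ℝ)-2 := by
    push_cast [Nat.cast_sub (by omega : 2 ≤ 2*n)]
    ring
  rw [hcast] at haux
  have hval : -4 * Real.sin (π / (2 * (2 * (n:ℝ) + 1))) ^ 2
      = 2*Real.cos (π/(2*(n:ℝ)-2+3)) - 2 := by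
    have h2u : 2*(n:ℝ)-2+3 = 2*(n:ℝ)+1 := by ring
    rw [h2u]
    set u : ℝ := π / (2 * (2*(n:ℝ) + 1)) with hu
    have hne : (2*(n:ℝ)+1) ≠ 0 := by positivity
    have hang : π/(2*(n:ℝ)+1) = 2*u := by
      rw [hu]
      field_simp
    rw [hang]
    have hc2 := Real.cos_two_mul u
    have ht := Real.sin_sq_add_cos_sq u
    linarith
  rw [hval]
  exact haux
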